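/- For every positive integer t, the generating function identity ∑_{n≥0} p_{t,t}(n) q^n = (1/(q;q)_∞) · ∑_{n≥0} (-1)^n q^{t n(n+1)/2} holds as formal power series. -/

import Mathlib

/-- The infinite product `∏_{n ≥ 1} (1 - q^{δ n})` in `ℤ[[q]]`: since the factor at
index `n` is `1 + O(q^n)` (for `δ ≥ 1`), the coefficient of `q^m` of the infinite product
equals that of the finite partial product over `1 ≤ n ≤ m`. -/
noncomputable def prodQ (δ : ℕ) : PowerSeries ℤ :=
  PowerSeries.mk fun m =>
    PowerSeries.coeff (R := ℤ) m (∏ n ∈ Finset.Icc 1 m, (1 - PowerSeries.X ^ (δ * n)))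

/-- `mex_{A,a}(λ)`: the least positive integer `≡ a (mod A)` that is not a part of `λ`. -/
noncomputable def mexP (A a : ℕ) {n : ℕ} (l : n.Partition) : ℕ :=
  sInf {k : ℕ | 0 < k ∧ k % A = a % A ∧ k ∉ l.parts}

/-- `p_{A,a}(n)`: the number of partitions `λ` of `n` with `mex_{A,a}(λ) ≡ a (mod 2A)`. -/
noncomputable def pAA (A a n : ℕ) : ℕ :=
  Nat.card {l : n.Partition // mexP A a l % (2 * A) = a % (2 * A)}

/-- The alternating theta series `∑_{n ≥ 0} (-1)^n q^{t n(n+1)/2}`. Since `t ≥ 1` and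
`n(n+1)/2 ≥ n`, only indices `n ≤ m` can contribute to the coefficient of `q^m`. -/
noncomputable def thetaAlt (t : ℕ) : PowerSeries ℤ :=
  PowerSeries.mk fun m =>
    ∑ n ∈ Finset.range (m + 1), if t * (n * (n + 1) / 2) = m then (-1 : ℤ) ^ n else 0

open Finset

namespace AN

variable {t : ℕ}

/-- number of partitions -/
def pc (n : ℕ) : ℕ := Fintype.card n.Partition

/-- triangular number as a sum -/
def T (k : ℕ) : ℕ := ∑ i ∈ Icc 1 k, i

lemma T_two_mul (k : ℕ) : 2 * T k = k * (k + 1) := by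
  have h : T k = ∑ i ∈ range (k+1), i := by
    rw [T, ← Finset.Ico_add_one_right_eq_Icc, Finset.sum_Ico_eq_sum_range, Finset.sum_range_succ']
    simp [add_comm]
  have h2 := Finset.sum_range_id_mul_two (k+1)
  simp only [Nat.add_sub_cancel] at h2
  rw [h, mul_comm 2, h2, mul_comm]

lemma T_eq (k : ℕ) : T k = k * (k + 1) / 2 := by have := T_two_mul k; omega

lemma le_T (k : ℕ) : k ≤ T k := by
  have := T_two_mul k
  nlinarith [Nat.le_add_right k 1]

/-- the multiset {t, 2t, ..., kt} -/
def Dm (t k : ℕ) : Multiset ℕ := (Finset.Icc 1 k).val.map (fun i => t * i)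

lemma Dm_sum (t k : ℕ) : (Dm t k).sum = t * T k := by
  rw [Dm, T, Finset.mul_sum]
  rfl

lemma mem_Dm {t k x : ℕ} : x ∈ Dm t k ↔ ∃ i, 1 ≤ i ∧ i ≤ k ∧ x = t * i := by
  simp only [Dm, Multiset.mem_map, Finset.mem_val, Finset.mem_Icc]
  constructor
  · rintro ⟨i, ⟨h1, h2⟩, rfl⟩; exact ⟨i, h1, h2, rfl⟩
  · rintro ⟨i, h1, h2, rfl⟩; exact ⟨i, ⟨h1, h2⟩, rfl⟩

lemma Dm_nodup (ht : 1 ≤ t) (k : ℕ) : (Dm t k).Nodup := by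
  refine Multiset.Nodup.map ?_ (Finset.Icc 1 k).nodup
  intro a b hab
  exact Nat.eq_of_mul_eq_mul_left ht hab

lemma Dm_le_iff (ht : 1 ≤ t) {k : ℕ} {P : Multiset ℕ} :
    Dm t k ≤ P ↔ ∀ i ∈ Icc 1 k, t * i ∈ P := by
  rw [Multiset.le_iff_subset (Dm_nodup ht k)]
  constructor
  · intro h i hi
    refine h ?_
    rw [mem_Dm]
    rw [Finset.mem_Icc] at hi
    exact ⟨i, hi.1, hi.2, rfl⟩
  · intro h x hx
    rw [mem_Dm] at hx
    obtain ⟨i, h1, h2, rfl⟩ := hx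
    exact h i (Finset.mem_Icc.mpr ⟨h1, h2⟩)

/-- partitions of m containing t, 2t, …, kt -/
noncomputable def A (t k m : ℕ) : Finset (Nat.Partition m) :=
  Finset.univ.filter (fun l => Dm t k ≤ l.parts)

lemma card_A_of_le (ht : 1 ≤ t) {k m : ℕ} (h : t * T k ≤ m) :
    (A t k m).card = pc (m - t * T k) := by
  classical
  rw [A, pc, ← Fintype.card_coe]
  apply Fintype.card_congr
  refine Equiv.trans (Equiv.subtypeEquivRight (q := fun l : Nat.Partition m => Dm t k ≤ l.parts)
    (by intro l; simp [A])) ?_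
  refine
    { toFun := fun l => ⟨l.1.parts - Dm t k, ?_, ?_⟩
      invFun := fun l => ⟨⟨l.parts + Dm t k, ?_, ?_⟩, ?_⟩
      left_inv := ?_
      right_inv := ?_ }
  · intro i hi
    exact l.1.parts_pos (Multiset.mem_of_le (Multiset.sub_le_self _ _) hi)
  · have h2 : (l.1.parts - Dm t k) + Dm t k = l.1.parts := tsub_add_cancel_of_le l.2
    have h3 := congrArg Multiset.sum h2
    rw [Multiset.sum_add, Dm_sum, l.1.parts_sum] at h3
    omega
  · intro i hi
    rcases Multiset.mem_add.mp hi with h1 | h1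
    · exact l.parts_pos h1
    · rw [mem_Dm] at h1
      obtain ⟨j, hj1, _, rfl⟩ := h1
      positivity
  · rw [Multiset.sum_add, Dm_sum, l.parts_sum]
    omega
  · exact Multiset.le_add_left _ _
  · rintro ⟨l, hl⟩
    apply Subtype.ext
    apply Nat.Partition.ext
    simp only
    exact tsub_add_cancel_of_le hl
  · rintro l
    apply Nat.Partition.ext
    simp only
    exact add_tsub_cancel_right _ _

lemma card_A_of_gt {k m : ℕ} (h : m < t * T k) : (A t k m).card = 0 := by
  rw [Finset.card_eq_zero]
  apply Finset.eq_empty_of_forall_notMem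
  intro l hl
  rw [A, Finset.mem_filter] at hl
  have h2 : (Dm t k).sum ≤ l.parts.sum := by
    conv_rhs => rw [← tsub_add_cancel_of_le hl.2]
    rw [Multiset.sum_add]; exact Nat.le_add_left _ _
  rw [Dm_sum, l.parts_sum] at h2
  omega

lemma A_subset {k m : ℕ} : A t (k+1) m ⊆ A t k m := by
  intro l hl
  rw [A, Finset.mem_filter] at hl ⊢
  refine ⟨hl.1, le_trans ?_ hl.2⟩
  apply Multiset.map_le_map
  rw [Multiset.le_iff_subset (Finset.Icc 1 k).nodup]
  intro x hx
  rw [Finset.mem_val, Finset.mem_Icc] at *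
  omega

/-- index of the least multiple of `t` missing from `l` -/
noncomputable def jmin (t : ℕ) {n : ℕ} (l : n.Partition) : ℕ :=
  sInf {j : ℕ | 1 ≤ j ∧ t * j ∉ l.parts}

lemma jmin_set_nonempty (ht : 1 ≤ t) {n : ℕ} (l : n.Partition) :
    {j : ℕ | 1 ≤ j ∧ t * j ∉ l.parts}.Nonempty := by
  refine ⟨n + 1, by omega, fun hmem => ?_⟩
  have h1 : t * (n + 1) ≤ l.parts.sum := Multiset.le_sum_of_mem hmem
  rw [l.parts_sum] at h1
  have : n + 1 ≤ t * (n + 1) := Nat.le_mul_of_pos_left _ ht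
  omega

lemma jmin_le (ht : 1 ≤ t) {n : ℕ} (l : n.Partition) : jmin t l ≤ n + 1 := by
  apply Nat.sInf_le
  have := jmin_set_nonempty ht l
  refine ⟨by omega, fun hmem => ?_⟩
  have h1 : t * (n + 1) ≤ l.parts.sum := Multiset.le_sum_of_mem hmem
  rw [l.parts_sum] at h1
  have : n + 1 ≤ t * (n + 1) := Nat.le_mul_of_pos_left _ ht
  omega

lemma jmin_pos (ht : 1 ≤ t) {n : ℕ} (l : n.Partition) : 1 ≤ jmin t l :=
  (Nat.sInf_mem (jmin_set_nonempty ht l)).1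

lemma mexP_eq (ht : 1 ≤ t) {n : ℕ} (l : n.Partition) : mexP t t l = t * jmin t l := by
  have hset : {k : ℕ | 0 < k ∧ k % t = t % t ∧ k ∉ l.parts}
      = (fun j => t * j) '' {j : ℕ | 1 ≤ j ∧ t * j ∉ l.parts} := by
    ext k
    simp only [Set.mem_setOf_eq, Set.mem_image, Nat.mod_self] at *
    constructor
    · rintro ⟨h1, h2, h3⟩
      have hdvd : t ∣ k := Nat.dvd_of_mod_eq_zero h2
      obtain ⟨j, rfl⟩ := hdvd
      exact ⟨j, ⟨Nat.pos_of_ne_zero fun hz => by simp [hz] at h1, h3⟩, rfl⟩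
    · rintro ⟨j, ⟨h1, h2⟩, rfl⟩
      exact ⟨Nat.mul_pos ht h1, by simp [Nat.mul_mod_right], h2⟩
  rw [mexP, hset]
  -- sInf of image under multiplication by t
  have hne := jmin_set_nonempty ht l
  apply le_antisymm
  · exact Nat.sInf_le ⟨jmin t l, Nat.sInf_mem hne, rfl⟩
  · obtain ⟨j', hj', heq⟩ := Nat.sInf_mem (hne.image _)
    rw [← heq]
    exact Nat.mul_le_mul_left t (Nat.sInf_le hj')

lemma mex_cond_iff (ht : 1 ≤ t) {n : ℕ} (l : n.Partition) :
    mexP t t l % (2 * t) = t % (2 * t) ↔ Odd (jmin t l) := by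
  rw [mexP_eq ht]
  set j := jmin t l with hj
  have ht2 : t % (2 * t) = t := Nat.mod_eq_of_lt (by omega)
  have h1 : t * j % (2 * t) = t * (j % 2) % (2 * t) := by
    conv_lhs => rw [← Nat.div_add_mod j 2, Nat.mul_add, show t * (2 * (j / 2)) = 2 * t * (j / 2) by ring]
    rw [Nat.mul_add_mod]
  rw [ht2, h1, Nat.odd_iff]
  rcases Nat.mod_two_eq_zero_or_one j with h | h <;> rw [h]
  · simp; omega
  · rw [mul_one, Nat.mod_eq_of_lt (by omega)]
    simp

lemma jmin_eq_iff (ht : 1 ≤ t) {n : ℕ} (l : n.Partition) {j : ℕ} (hj : 1 ≤ j) :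
    jmin t l = j ↔ (Dm t (j - 1) ≤ l.parts ∧ ¬ Dm t j ≤ l.parts) := by
  rw [Dm_le_iff ht, Dm_le_iff ht]
  have hne := jmin_set_nonempty ht l
  constructor
  · intro h
    have hmem := Nat.sInf_mem hne
    rw [show sInf {j : ℕ | 1 ≤ j ∧ t * j ∉ l.parts} = jmin t l from rfl, h] at hmem
    refine ⟨fun i hi => ?_, fun hall => hmem.2 (hall j (Finset.mem_Icc.mpr ⟨hj, le_refl j⟩))⟩
    rw [Finset.mem_Icc] at hi
    have hlt : i < j := by omega
    have := Nat.notMem_of_lt_sInf (s := {j : ℕ | 1 ≤ j ∧ t * j ∉ l.parts}) (by rw [show sInf {j : ℕ | 1 ≤ j ∧ t * j ∉ l.parts} = jmin t l from rfl, h]; exact hlt)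
    simp only [Set.mem_setOf_eq, not_and, not_not] at this
    exact this hi.1
  · rintro ⟨h1, h2⟩
    have hnotj : t * j ∉ l.parts := by
      by_contra hc
      exact h2 (fun i hi => by
        rw [Finset.mem_Icc] at hi
        rcases Nat.lt_or_ge i j with hlt | hge
        · exact h1 i (Finset.mem_Icc.mpr ⟨hi.1, by omega⟩)
        · have : i = j := by omega
          rwa [this])
    apply le_antisymm
    · exact Nat.sInf_le ⟨hj, hnotj⟩
    · by_contra hc
      push_neg at hc
      have hmem := Nat.sInf_mem hne
      have hi : jmin t l ∈ Finset.Icc 1 (j - 1) := Finset.mem_Icc.mpr ⟨hmem.1, by omega⟩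
      exact hmem.2 (h1 _ hi)

lemma filter_jmin_eq (ht : 1 ≤ t) {m i : ℕ} :
    Finset.univ.filter (fun l : Nat.Partition m => jmin t l = 2 * i + 1)
      = A t (2 * i) m \ A t (2 * i + 1) m := by
  classical
  ext l
  rw [Finset.mem_filter, Finset.mem_sdiff, A, A, Finset.mem_filter, Finset.mem_filter]
  rw [jmin_eq_iff ht l (by omega)]
  simp only [Finset.mem_univ, true_and, not_and, Nat.add_sub_cancel]

lemma card_fiber (ht : 1 ≤ t) {m i : ℕ} :
    (Finset.univ.filter (fun l : Nat.Partition m => jmin t l = 2 * i + 1)).card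
      + (A t (2 * i + 1) m).card = (A t (2 * i) m).card := by
  rw [filter_jmin_eq ht]
  exact Finset.card_sdiff_add_card_eq_card A_subset

lemma pAA_count (ht : 1 ≤ t) (m : ℕ) :
    pAA t t m = ∑ i ∈ range (m + 1),
      (Finset.univ.filter (fun l : Nat.Partition m => jmin t l = 2 * i + 1)).card := by
  classical
  rw [pAA, Nat.card_eq_fintype_card, Fintype.card_subtype]
  have hfc : Finset.univ.filter (fun l : Nat.Partition m => mexP t t l % (2 * t) = t % (2 * t))
      = Finset.univ.filter (fun l => Odd (jmin t l)) := by
    apply Finset.filter_congr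
    intro l _
    exact mex_cond_iff ht l
  rw [hfc]
  rw [Finset.card_eq_sum_card_fiberwise
    (f := fun l : Nat.Partition m => (jmin t l - 1) / 2) (t := range (m + 1)) ?_]
  · apply Finset.sum_congr rfl
    intro i _
    congr 1
    rw [Finset.filter_filter]
    apply Finset.filter_congr
    intro l _
    simp only [eq_iff_iff, Nat.odd_iff]
    have := jmin_pos ht l
    omega
  · intro l hl
    rw [Finset.mem_coe, Finset.mem_filter] at hl
    have h1 := jmin_le ht l
    rw [Finset.mem_coe, Finset.mem_range]
    show (jmin t l - 1) / 2 < m + 1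
    omega

section Archive
open PowerSeries
open scoped Classical
variable {α : Type*}

noncomputable def indicatorSeries (α : Type*) [Semiring α] (s : Set ℕ) : PowerSeries α :=
  PowerSeries.mk fun n => if n ∈ s then 1 else 0

theorem coeff_indicator (s : Set ℕ) [Semiring α] (n : ℕ) :
    coeff (R := α) n (indicatorSeries _ s) = if n ∈ s then 1 else 0 :=
  coeff_mk _ _

theorem coeff_indicator_pos (s : Set ℕ) [Semiring α] (n : ℕ) (h : n ∈ s) :
    coeff (R := α) n (indicatorSeries _ s) = 1 := by rw [coeff_indicator, if_pos h]

theorem coeff_indicator_neg (s : Set ℕ) [Semiring α] (n : ℕ) (h : n ∉ s) :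
    coeff (R := α) n (indicatorSeries _ s) = 0 := by rw [coeff_indicator, if_neg h]

theorem constantCoeff_indicator (s : Set ℕ) [Semiring α] :
    constantCoeff (R := α) (indicatorSeries _ s) = if 0 ∈ s then 1 else 0 :=
  rfl

theorem two_series (i : ℕ) [Semiring α] :
    1 + (X : PowerSeries α) ^ i.succ = indicatorSeries α {0, i.succ} := by
  ext n
  simp only [coeff_indicator, coeff_one, coeff_X_pow, Set.mem_insert_iff, Set.mem_singleton_iff,
    map_add]
  cases' n with d
  · simp [(Nat.succ_ne_zero i).symm]
  · simp [Nat.succ_ne_zero d]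

theorem num_series' [Field α] (i : ℕ) :
    (1 - (X : PowerSeries α) ^ (i + 1))⁻¹ = indicatorSeries α {k | i + 1 ∣ k} := by
  rw [PowerSeries.inv_eq_iff_mul_eq_one]
  · ext n
    cases n with
    | zero => simp [mul_sub, zero_pow, constantCoeff_indicator]
    | succ n =>
      simp only [coeff_one, if_false, mul_sub, mul_one, coeff_indicator,
        LinearMap.map_sub, reduceCtorEq]
      simp_rw [coeff_mul, coeff_X_pow, coeff_indicator, @boole_mul _ _ _ _]
      erw [@sum_ite _ _ _ _ _ (fun _ => Classical.propDecidable _), sum_ite]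
      simp_rw [@filter_filter _ _ _ _ _, sum_const_zero, add_zero, sum_const, nsmul_eq_mul, mul_one,
        sub_eq_iff_eq_add, zero_add]
      symm
      split_ifs with h
      · suffices #{a ∈ antidiagonal (n + 1) | i + 1 ∣ a.fst ∧ a.snd = i + 1} = 1 by
          simp only [Set.mem_setOf_eq]; convert congr_arg ((↑) : ℕ → α) this; norm_cast
        rw [card_eq_one]
        cases' h with p hp
        refine ⟨((i + 1) * (p - 1), i + 1), ?_⟩
        ext ⟨a₁, a₂⟩
        simp only [mem_filter, Prod.mk_inj, HasAntidiagonal.mem_antidiagonal, mem_singleton]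
        constructor
        · rintro ⟨a_left, ⟨a, rfl⟩, rfl⟩
          refine ⟨?_, rfl⟩
          rw [Nat.mul_sub_left_distrib, ← hp, ← a_left, mul_one, Nat.add_sub_cancel]
        · rintro ⟨rfl, rfl⟩
          match p with
          | 0 => rw [mul_zero] at hp; cases hp
          | p + 1 => rw [hp]; simp [mul_add]
      · suffices #{a ∈ antidiagonal (n + 1) | i + 1 ∣ a.fst ∧ a.snd = i + 1} = 0 by
          simp only [Set.mem_setOf_eq]; convert congr_arg ((↑) : ℕ → α) this; norm_cast
        rw [card_eq_zero]
        apply eq_empty_of_forall_notMem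
        simp only [Prod.forall, mem_filter, not_and, HasAntidiagonal.mem_antidiagonal]
        rintro _ h₁ h₂ ⟨a, rfl⟩ rfl
        apply h
        simp [← h₂]
  · simp [zero_pow]

theorem partialGF_prop (α : Type*) [CommSemiring α] (n : ℕ) (s : Finset ℕ) (hs : ∀ i ∈ s, 0 < i)
    (c : ℕ → Set ℕ) (hc : ∀ i, i ∉ s → 0 ∈ c i) :
    #{p : n.Partition | (∀ j, p.parts.count j ∈ c j) ∧ ∀ j ∈ p.parts, j ∈ s} =
      coeff (R := α) n (∏ i ∈ s, indicatorSeries α ((· * i) '' c i)) := by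
  simp_rw [coeff_prod, coeff_indicator, prod_boole, sum_boole]
  apply congr_arg
  simp only [mem_univ, forall_true_left, not_and, not_forall, exists_prop,
    Set.mem_image, not_exists]
  set φ : (a : Nat.Partition n) →
    a ∈ filter (fun p ↦ (∀ (j : ℕ), Multiset.count j p.parts ∈ c j) ∧ ∀ j ∈ p.parts, j ∈ s) univ →
    ℕ →₀ ℕ := fun p _ => {
      toFun := fun i => Multiset.count i p.parts • i
      support := Finset.filter (fun i => i ≠ 0) p.parts.toFinset
      mem_support_toFun := fun a => by
        simp only [smul_eq_mul, ne_eq, mul_eq_zero, Multiset.count_eq_zero]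
        rw [not_or, not_not]
        simp only [Multiset.mem_toFinset, not_not, mem_filter] }
  refine Finset.card_bij φ ?_ ?_ ?_
  · intro a ha
    simp only [φ, not_forall, not_exists, not_and, exists_prop, mem_filter]
    rw [mem_finsuppAntidiag]
    dsimp only [ne_eq, smul_eq_mul, id_eq, eq_mpr_eq_cast, le_eq_subset, Finsupp.coe_mk]
    simp only [mem_univ, forall_true_left, not_and, not_forall, exists_prop,
      mem_filter, true_and] at ha
    refine ⟨⟨?_, fun i ↦ ?_⟩, fun i _ ↦ ⟨a.parts.count i, ha.1 i, rfl⟩⟩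
    · conv_rhs => simp [← a.parts_sum]
      rw [sum_multiset_count_of_subset _ s]
      · simp only [smul_eq_mul]
      · intro i
        simp only [Multiset.mem_toFinset, not_not, mem_filter]
        apply ha.2
    · simp only [ne_eq, Multiset.mem_toFinset, not_not, mem_filter, and_imp]
      exact fun hi _ ↦ ha.2 i hi
  · intro p₁ hp₁ p₂ hp₂ h
    apply Nat.Partition.ext
    simp only [true_and, mem_univ, mem_filter] at hp₁ hp₂
    ext i
    simp only [φ, ne_eq, Multiset.mem_toFinset, not_not, smul_eq_mul, Finsupp.mk.injEq] at h
    by_cases hi : i = 0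
    · rw [hi]
      rw [Multiset.count_eq_zero_of_notMem]
      · rw [Multiset.count_eq_zero_of_notMem]
        intro a; exact Nat.lt_irrefl 0 (hs 0 (hp₂.2 0 a))
      intro a; exact Nat.lt_irrefl 0 (hs 0 (hp₁.2 0 a))
    · rw [← mul_left_inj' hi]
      rw [funext_iff] at h
      exact h.2 i
  · simp only [φ, mem_filter, mem_finsuppAntidiag, mem_univ, exists_prop, true_and, and_assoc]
    rintro f ⟨hf, hf₃, hf₄⟩
    have hf' : f ∈ finsuppAntidiag s n := mem_finsuppAntidiag.mpr ⟨hf, hf₃⟩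
    simp only [mem_finsuppAntidiag] at hf'
    refine ⟨⟨∑ i ∈ s, Multiset.replicate (f i / i) i, ?_, ?_⟩, ?_, ?_, ?_⟩
    · intro i hi
      simp only [exists_prop, Multiset.mem_sum, mem_map, Function.Embedding.coeFn_mk] at hi
      rcases hi with ⟨t, ht, z⟩
      apply hs
      rwa [Multiset.eq_of_mem_replicate z]
    · simp_rw [Multiset.sum_sum, Multiset.sum_replicate, Nat.nsmul_eq_mul]
      rw [← hf'.1]
      refine sum_congr rfl fun i hi => Nat.div_mul_cancel ?_
      rcases hf₄ i hi with ⟨w, _, hw₂⟩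
      rw [← hw₂]
      exact dvd_mul_left _ _
    · intro i
      simp_rw [Multiset.count_sum', Multiset.count_replicate, sum_ite_eq']
      split_ifs with h
      · rcases hf₄ i h with ⟨w, hw₁, hw₂⟩
        rwa [← hw₂, Nat.mul_div_cancel _ (hs i h)]
      · exact hc _ h
    · intro i hi
      rw [Multiset.mem_sum] at hi
      rcases hi with ⟨j, hj₁, hj₂⟩
      rwa [Multiset.eq_of_mem_replicate hj₂]
    · ext i
      simp_rw [Multiset.count_sum', Multiset.count_replicate, sum_ite_eq']
      simp only [ne_eq, Multiset.mem_toFinset, not_not, smul_eq_mul, ite_mul,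
        zero_mul, Finsupp.coe_mk]
      split_ifs with h
      · apply Nat.div_mul_cancel
        rcases hf₄ i h with ⟨w, _, hw₂⟩
        apply Dvd.intro_left _ hw₂
      · apply symm
        rw [← Finsupp.notMem_support_iff]
        exact notMem_mono hf'.2 h

end Archive

section PS
open PowerSeries
open scoped Classical

lemma Icc_one_eq_Ioc (N : ℕ) : Finset.Icc 1 N = Finset.Ioc 0 N := Finset.Icc_add_one_left_eq_Ioc 0 N

noncomputable def PQ : ℚ⟦X⟧ := PowerSeries.mk fun n => (pc n : ℚ)

noncomputable def FQ (N : ℕ) : ℚ⟦X⟧ := ∏ n ∈ Icc 1 N, (1 - X ^ n)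

noncomputable def GQ (N : ℕ) : ℚ⟦X⟧ := ∏ n ∈ Icc 1 N, ((1 : ℚ⟦X⟧) - X ^ n)⁻¹

noncomputable def prodQQ : ℚ⟦X⟧ := PowerSeries.mk fun m => coeff (R := ℚ) m (FQ m)

noncomputable def thetaQ (t : ℕ) : ℚ⟦X⟧ :=
  PowerSeries.mk fun m =>
    ∑ n ∈ range (m + 1), if t * (n * (n + 1) / 2) = m then (-1 : ℚ) ^ n else 0

noncomputable def PaQ (t : ℕ) : ℚ⟦X⟧ := PowerSeries.mk fun n => (pAA t t n : ℚ)

lemma coeff_mul_congr_left {φ φ' ψ : ℚ⟦X⟧} {m : ℕ}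
    (h : ∀ j ≤ m, coeff (R := ℚ) j φ = coeff (R := ℚ) j φ') :
    coeff (R := ℚ) m (φ * ψ) = coeff (R := ℚ) m (φ' * ψ) := by
  rw [coeff_mul, coeff_mul]
  refine Finset.sum_congr rfl fun p hp => ?_
  rw [h p.1 (Finset.HasAntidiagonal.antidiagonal.fst_le hp)]

lemma coeff_mul_congr_right {φ ψ ψ' : ℚ⟦X⟧} {m : ℕ}
    (h : ∀ j ≤ m, coeff (R := ℚ) j ψ = coeff (R := ℚ) j ψ') :
    coeff (R := ℚ) m (φ * ψ) = coeff (R := ℚ) m (φ * ψ') := by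
  rw [coeff_mul, coeff_mul]
  refine Finset.sum_congr rfl fun p hp => ?_
  rw [h p.2 (Finset.HasAntidiagonal.antidiagonal.snd_le hp)]

lemma FQ_stab {j N : ℕ} (h : j ≤ N) : coeff (R := ℚ) j (FQ N) = coeff (R := ℚ) j (FQ j) := by
  have hsplit : FQ j * ∏ n ∈ Ioc j N, (1 - (X:ℚ⟦X⟧) ^ n) = FQ N := by
    rw [FQ, FQ, Icc_one_eq_Ioc, Icc_one_eq_Ioc]
    exact Finset.prod_Ioc_consecutive _ (Nat.zero_le j) h
  rw [← hsplit]
  refine coeff_mul_prod_one_sub_of_lt_order j (Ioc j N) (FQ j) (fun n => X ^ n) ?_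
  intro i hi
  rw [order_X_pow]
  rw [Finset.mem_Ioc] at hi
  exact_mod_cast hi.1

lemma coeff_prodQQ {j N : ℕ} (h : j ≤ N) : coeff (R := ℚ) j prodQQ = coeff (R := ℚ) j (FQ N) := by
  rw [prodQQ, coeff_mk, FQ_stab h]

lemma GQ_mul_FQ (N : ℕ) : GQ N * FQ N = 1 := by
  rw [GQ, FQ, ← Finset.prod_mul_distrib]
  apply Finset.prod_eq_one
  intro n hn
  rw [Finset.mem_Icc] at hn
  refine PowerSeries.inv_mul_cancel _ ?_
  rw [map_sub, map_pow, constantCoeff_one, constantCoeff_X, zero_pow (by omega), sub_zero]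
  exact one_ne_zero

lemma coeff_GQ {m i : ℕ} (h : i ≤ m) : coeff (R := ℚ) i (GQ m) = (pc i : ℚ) := by
  have h1 : ∀ n ∈ Icc 1 m, ((1 : ℚ⟦X⟧) - X ^ n)⁻¹ = indicatorSeries ℚ ((· * n) '' Set.univ) := by
    intro n hn
    rw [Finset.mem_Icc] at hn
    have hn1 : n = (n - 1) + 1 := by omega
    have hset : ∀ d : ℕ, {k : ℕ | d + 1 ∣ k} = ((· * (d + 1)) '' Set.univ) := by
      intro d
      ext k
      constructor
      · rintro ⟨c, rfl⟩
        exact ⟨c, Set.mem_univ c, mul_comm _ _⟩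
      · rintro ⟨c, -, rfl⟩
        exact Dvd.intro_left c rfl
    rw [hn1, num_series', hset]
  rw [GQ, Finset.prod_congr rfl h1,
    ← partialGF_prop ℚ i (Icc 1 m) (fun n hn => (Finset.mem_Icc.mp hn).1)
      (fun _ => Set.univ) (fun _ _ => trivial)]
  rw [pc, ← Finset.card_univ]
  norm_cast
  congr 1
  refine (Finset.eq_univ_iff_forall.mpr fun p => ?_)
  simp only [Finset.mem_filter, Finset.mem_univ, true_and, Set.mem_univ, forall_const,
    true_and, Finset.mem_Icc]
  intro j hj
  exact ⟨p.parts_pos hj,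
    le_trans (le_trans (Multiset.le_sum_of_mem hj) (le_of_eq p.parts_sum)) h⟩

lemma key1 : PQ * prodQQ = 1 := by
  ext m
  have e1 : coeff (R := ℚ) m (PQ * prodQQ) = coeff (R := ℚ) m (PQ * FQ m) :=
    coeff_mul_congr_right (fun j hj => coeff_prodQQ hj)
  have e2 : coeff (R := ℚ) m (PQ * FQ m) = coeff (R := ℚ) m (GQ m * FQ m) :=
    coeff_mul_congr_left (fun j hj => by rw [PQ, coeff_mk, coeff_GQ hj])
  rw [e1, e2, GQ_mul_FQ]

lemma sum_range_two_mul (f : ℕ → ℚ) (n : ℕ) :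
    ∑ k ∈ range (2 * n), f k = ∑ i ∈ range n, (f (2 * i) + f (2 * i + 1)) := by
  induction n with
  | zero => simp
  | succ n ih =>
    have h2 : 2 * (n + 1) = (2 * n + 1) + 1 := by ring
    rw [h2, Finset.sum_range_succ, Finset.sum_range_succ, ih, Finset.sum_range_succ]
    ring

noncomputable def ThFin (t m : ℕ) : ℚ⟦X⟧ :=
  ∑ k ∈ range (2 * (m + 1)), PowerSeries.C (R := ℚ) ((-1) ^ k) * X ^ (t * T k)

lemma coeff_ThFin (t m j : ℕ) :
    coeff (R := ℚ) j (ThFin t m) = ∑ k ∈ range (2 * (m + 1)), if j = t * T k then (-1 : ℚ) ^ k else 0 := by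
  rw [ThFin, map_sum]
  refine Finset.sum_congr rfl fun k _ => ?_
  rw [coeff_C_mul, coeff_X_pow]
  split_ifs <;> simp

lemma theta_agree (ht : 1 ≤ t) {m j : ℕ} (hj : j ≤ m) :
    coeff (R := ℚ) j (thetaQ t) = coeff (R := ℚ) j (ThFin t m) := by
  rw [thetaQ, coeff_mk, coeff_ThFin]
  have hT : ∀ n, t * (n * (n + 1) / 2) = t * T n := fun n => by rw [T_eq]
  have hsub : range (j + 1) ⊆ range (2 * (m + 1)) := by
    intro x hx; rw [Finset.mem_range] at *; omega
  rw [Finset.sum_subset hsub ?_]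
  · refine Finset.sum_congr rfl fun n _ => ?_
    rw [hT n]
    exact if_congr eq_comm rfl rfl
  · intro x hx hnx
    rw [Finset.mem_range] at hnx
    have hx2 : j < x := by omega
    have : x ≤ t * T x := le_trans (le_T x) (Nat.le_mul_of_pos_left _ ht)
    rw [hT x, if_neg (by omega)]

lemma cardA_cast (ht : 1 ≤ t) (k m : ℕ) :
    ((A t k m).card : ℚ) = if t * T k ≤ m then (pc (m - t * T k) : ℚ) else 0 := by
  split_ifs with h
  · rw [card_A_of_le ht h]
  · rw [card_A_of_gt (by omega)]; simp

lemma key2 (ht : 1 ≤ t) : PaQ t = thetaQ t * PQ := by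
  ext m
  rw [PaQ, coeff_mk]
  rw [coeff_mul_congr_left (fun j hj => theta_agree ht hj)]
  rw [ThFin, Finset.sum_mul, map_sum]
  have hterm : ∀ k, coeff (R := ℚ) m (PowerSeries.C (R := ℚ) ((-1) ^ k) * X ^ (t * T k) * PQ)
      = (-1 : ℚ) ^ k * ((A t k m).card : ℚ) := by
    intro k
    rw [mul_assoc, coeff_C_mul, mul_comm ((X : ℚ⟦X⟧) ^ (t * T k)) PQ, coeff_mul_X_pow',
      cardA_cast ht]
    congr 1
    split_ifs with h
    · rw [PQ, coeff_mk]
    · rfl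
  rw [Finset.sum_congr rfl (fun k _ => hterm k)]
  rw [sum_range_two_mul]
  rw [pAA_count ht m]
  push_cast
  refine Finset.sum_congr rfl fun i _ => ?_
  have hf := card_fiber (t := t) ht (m := m) (i := i)
  have hodd : ((-1 : ℚ)) ^ (2 * i) = 1 := by rw [pow_mul]; norm_num
  have hodd2 : ((-1 : ℚ)) ^ (2 * i + 1) = -1 := by rw [pow_succ, hodd]; ring
  rw [hodd, hodd2]
  have hc := congrArg (fun x : ℕ => (x : ℚ)) hf
  push_cast at hc
  linarith

lemma keyQ (ht : 1 ≤ t) : PaQ t * prodQQ = thetaQ t := by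
  rw [key2 ht, mul_assoc, key1, mul_one]

lemma map_F (N : ℕ) :
    PowerSeries.map (Int.castRingHom ℚ) (∏ n ∈ Icc 1 N, (1 - (X : ℤ⟦X⟧) ^ n)) = FQ N := by
  rw [FQ, map_prod]
  refine Finset.prod_congr rfl fun n _ => ?_
  rw [map_sub, map_one, map_pow, PowerSeries.map_X]

lemma map_prodQ : PowerSeries.map (Int.castRingHom ℚ) (prodQ 1) = prodQQ := by
  ext m
  rw [PowerSeries.coeff_map, prodQ, coeff_mk, prodQQ, coeff_mk]
  simp only [one_mul]
  rw [← map_F m, PowerSeries.coeff_map]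

lemma map_theta (t : ℕ) : PowerSeries.map (Int.castRingHom ℚ) (thetaAlt t) = thetaQ t := by
  ext m
  rw [PowerSeries.coeff_map, thetaAlt, coeff_mk, thetaQ, coeff_mk, map_sum]
  refine Finset.sum_congr rfl fun n _ => ?_
  rw [apply_ite (Int.castRingHom ℚ), map_pow, map_neg, map_one, map_zero]

lemma map_pa (t : ℕ) :
    PowerSeries.map (Int.castRingHom ℚ) (PowerSeries.mk fun n => (pAA t t n : ℤ)) = PaQ t := by
  ext n
  rw [PowerSeries.coeff_map, coeff_mk, PaQ, coeff_mk]
  exact map_natCast _ _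

end PS

end AN

theorem stmt5 (t : ℕ) (ht : 1 ≤ t) :
    (PowerSeries.mk fun n => (pAA t t n : ℤ)) * prodQ 1 = thetaAlt t := by
  have hinj : Function.Injective (PowerSeries.map (Int.castRingHom ℚ)) := fun a b hab =>
    PowerSeries.ext fun n => by
      have h := congrArg (PowerSeries.coeff (R := ℚ) n) hab
      rw [PowerSeries.coeff_map, PowerSeries.coeff_map, eq_intCast, eq_intCast] at h
      exact_mod_cast h
  apply hinj
  rw [map_mul, AN.map_pa, AN.map_prodQ, AN.map_theta, AN.keyQ ht]
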